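/- Let r_DZ, r_DX, r_ZX, and k be real numbers with 0 < r_DX² < 1, r_ZX² < 1, k ≥ 0, and |r_DZ| = √k · |r_DX|. Define the recursive partial correlation R = (r_DZ − r_DX · r_ZX) / (√(1 − r_DX²) · √(1 − r_ZX²)). Then R² ≥ α · f², where α = (√k − |r_ZX|)² / (1 − r_ZX²) ≥ 0 and f² = r_DX² / (1 − r_DX²). (In the paper's notation, with r_DZ = R_{D∼Z|X₋ⱼ}, r_DX = R_{D∼Xⱼ|X₋ⱼ}, r_ZX = R_{Z∼Xⱼ|X₋ⱼ}, and k = k_D = R²_{D∼Z|X₋ⱼ}/R²_{D∼Xⱼ|X₋ⱼ}, this gives the lower bound R²_{D∼Z|X} ≥ α_D f²_{D∼Xⱼ|X₋ⱼ}; the identical statement with D replaced by Y gives R²_{Y∼Z|X} ≥ α_Y f²_{Y∼Xⱼ|X₋ⱼ}.) -/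
import Mathlib


/-- Lower bound for the squared recursive partial correlation:
`R² ≥ α f²` with `α = (√k − |r_ZX|)²/(1 − r_ZX²) ≥ 0` and
`f² = r_DX²/(1 − r_DX²)`. -/
theorem partial_corr_lower_bound (rDZ rDX rZX k : ℝ)
    (h1 : 0 < rDX ^ 2) (h2 : rDX ^ 2 < 1) (h3 : rZX ^ 2 < 1)
    (hk : 0 ≤ k)
    (habs : |rDZ| = Real.sqrt k * |rDX|) :
    0 ≤ (Real.sqrt k - |rZX|) ^ 2 / (1 - rZX ^ 2) ∧
    ((rDZ - rDX * rZX) /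
        (Real.sqrt (1 - rDX ^ 2) * Real.sqrt (1 - rZX ^ 2))) ^ 2 ≥
      ((Real.sqrt k - |rZX|) ^ 2 / (1 - rZX ^ 2)) *
        (rDX ^ 2 / (1 - rDX ^ 2)) := by
  have hd1 : 0 < 1 - rDX ^ 2 := by linarith
  have hd2 : 0 < 1 - rZX ^ 2 := by linarith
  refine ⟨by positivity, ?_⟩
  have key : rDX ^ 2 * (Real.sqrt k - |rZX|) ^ 2 ≤ (rDZ - rDX * rZX) ^ 2 := by
    have hA : |(|rDZ| - |rDX * rZX|)| ≤ |rDZ - rDX * rZX| :=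
      abs_abs_sub_abs_le_abs_sub _ _
    have hB : (|rDZ| - |rDX * rZX|) ^ 2 ≤ (rDZ - rDX * rZX) ^ 2 := by
      rw [← sq_abs (rDZ - rDX * rZX), ← sq_abs (|rDZ| - |rDX * rZX|)]
      exact pow_le_pow_left₀ (abs_nonneg _) hA 2
    calc rDX ^ 2 * (Real.sqrt k - |rZX|) ^ 2
        = (|rDZ| - |rDX * rZX|) ^ 2 := by
          rw [habs, abs_mul, ← sq_abs rDX]; ring
      _ ≤ _ := hB
  rw [ge_iff_le, div_pow, mul_pow, Real.sq_sqrt hd1.le, Real.sq_sqrt hd2.le,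
    div_mul_div_comm, div_le_div_iff₀ (by positivity) (by positivity)]
  nlinarith [mul_le_mul_of_nonneg_right key (mul_pos hd1 hd2).le]
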